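/- Let H be a complex Hilbert space, G a bounded selfadjoint operator with canonical decomposition H = H₊ ⊕ H₋ ⊕ N(G), G = G₊ ⊕ (−G₋) ⊕ 0 with G± positive definite and ‖G₊‖ = ‖G₋‖ = 1/κ, and assume N₋ = ker(I + κG) ≠ {0}. Let u₀ ∈ H with Gu₀ ≠ 0, and suppose the unique admissible multiplier γ equals κ, i.e. there exists y ∈ Q(G) with (I + κG)y = u₀. Then there exists α₋ ≥ 0 such that the full solution set {y ∈ Q(G) : (I + κG)y = u₀} equals (I + κG)† u₀ + α₋ · (N₋ ∩ S), where (I + κG)† is the Moore–Penrose inverse and S is the unit sphere of H. -/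

import Mathlib

open scoped InnerProductSpace

/-- Lemma 5.2 (ii): at the boundary multiplier `γ = κ`, the solution set
`{y ∈ Q(G) : (I + κG)y = u₀}` equals `(I + κG)† u₀ + α₋ · (N₋ ∩ S)` for some `α₋ ≥ 0`.
The Moore–Penrose inverse `(I + κG)† u₀` is characterized as the unique solution `y*` of
`(I + κG) y* = u₀` lying in `(ker(I + κG))ᗮ`. -/
theorem boundary_solution_set
    {H : Type*} [NormedAddCommGroup H] [InnerProductSpace ℂ H] [CompleteSpace H]
    (G : H →L[ℂ] H) (hG : IsSelfAdjoint G) (κ : ℝ) (hκ : 0 < κ)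
    (Hp Hm : Submodule ℂ H)
    (hpm : ∀ x ∈ Hp, ∀ y ∈ Hm, ⟪x, y⟫_ℂ = 0)
    (hp0 : ∀ x ∈ Hp, ∀ y ∈ LinearMap.ker (G : H →ₗ[ℂ] H), ⟪x, y⟫_ℂ = 0)
    (hm0 : ∀ x ∈ Hm, ∀ y ∈ LinearMap.ker (G : H →ₗ[ℂ] H), ⟪x, y⟫_ℂ = 0)
    (hspan : ∀ x : H, ∃ xp ∈ Hp, ∃ xm ∈ Hm, ∃ x0 ∈ LinearMap.ker (G : H →ₗ[ℂ] H), x = xp + xm + x0)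
    (hinvp : ∀ x ∈ Hp, G x ∈ Hp) (hinvm : ∀ x ∈ Hm, G x ∈ Hm)
    (hposp : ∃ α > 0, ∀ x ∈ Hp, α * ‖x‖ ^ 2 ≤ (⟪G x, x⟫_ℂ).re)
    (hnegm : ∃ β > 0, ∀ x ∈ Hm, (⟪G x, x⟫_ℂ).re ≤ -(β * ‖x‖ ^ 2))
    (hnormp : IsLUB {r : ℝ | ∃ x ∈ Hp, ‖x‖ = 1 ∧ r = ‖G x‖} (1 / κ))
    (hnormm : IsLUB {r : ℝ | ∃ x ∈ Hm, ‖x‖ = 1 ∧ r = ‖G x‖} (1 / κ))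
    (hNm : LinearMap.ker (((1 : H →L[ℂ] H) + (κ : ℂ) • G : H →L[ℂ] H) : H →ₗ[ℂ] H) ≠ ⊥)
    (u₀ : H) (hu : G u₀ ≠ 0)
    (hex : ∃ y : H, ⟪G y, y⟫_ℂ = 0 ∧ ((1 : H →L[ℂ] H) + (κ : ℂ) • G) y = u₀) :
    ∃ (ystar : H) (α : ℝ), 0 ≤ α ∧
      ystar ∈ (LinearMap.ker (((1 : H →L[ℂ] H) + (κ : ℂ) • G : H →L[ℂ] H) : H →ₗ[ℂ] H))ᗮ ∧
      ((1 : H →L[ℂ] H) + (κ : ℂ) • G) ystar = u₀ ∧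
      {y : H | ⟪G y, y⟫_ℂ = 0 ∧ ((1 : H →L[ℂ] H) + (κ : ℂ) • G) y = u₀}
        = {y : H | ∃ v ∈ LinearMap.ker (((1 : H →L[ℂ] H) + (κ : ℂ) • G : H →L[ℂ] H) : H →ₗ[ℂ] H),
            ‖v‖ = 1 ∧ y = ystar + (α : ℂ) • v} := by
  obtain ⟨y, hy0, hyT⟩ := hex
  set T : H →L[ℂ] H := (1 : H →L[ℂ] H) + (κ : ℂ) • G with hT
  set K : Submodule ℂ H := LinearMap.ker (T : H →ₗ[ℂ] H) with hK
  have hκ' : (κ : ℂ) ≠ 0 := by exact_mod_cast hκ.ne'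
  have hTapp : ∀ x : H, T x = x + (κ : ℂ) • G x := fun x => by
    simp [hT, ContinuousLinearMap.add_apply]
  -- G acts as -(1/κ) on K
  have hGker : ∀ w ∈ K, G w = (-(κ : ℂ)⁻¹) • w := by
    intro w hw
    have h0 : T w = 0 := hw
    rw [hTapp] at h0
    have : (κ : ℂ) • G w = -w := eq_neg_of_add_eq_zero_right h0
    calc G w = (κ : ℂ)⁻¹ • ((κ : ℂ) • G w) := by
            rw [smul_smul, inv_mul_cancel₀ hκ', one_smul]
      _ = (-(κ : ℂ)⁻¹) • w := by rw [this, smul_neg, neg_smul]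
  -- completeness of K
  have : CompleteSpace K := (ContinuousLinearMap.isClosed_ker T).completeSpace_coe
  obtain ⟨y₁, hy₁, y₀, hy₀, hsum⟩ := K.exists_add_mem_mem_orthogonal y
  have hTy₀ : T y₀ = u₀ := by
    have h1 : T y₁ = 0 := hy₁
    rw [← hyT, hsum, map_add, h1, zero_add]
  have hsym : ∀ a b : H, ⟪G a, b⟫_ℂ = ⟪a, G b⟫_ℂ := fun a b => hG.isSymmetric a b
  -- quadratic form expansion
  have hq : ∀ z ∈ Kᗮ, ∀ w ∈ K,
      ⟪G (z + w), z + w⟫_ℂ = ⟪G z, z⟫_ℂ - (κ : ℂ)⁻¹ * (‖w‖ : ℂ) ^ 2 := by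
    intro z hz w hw
    have hzw : ⟪w, z⟫_ℂ = 0 := hz w hw
    have hwz : ⟪z, w⟫_ℂ = 0 := by
      rw [← inner_conj_symm, hzw, map_zero]
    have hGz_w : ⟪G z, w⟫_ℂ = 0 := by
      rw [hsym z w, hGker w hw, inner_smul_right, hwz, mul_zero]
    have hGw_z : ⟪G w, z⟫_ℂ = 0 := by
      rw [hGker w hw, inner_smul_left, hzw, mul_zero]
    have hGw_w : ⟪G w, w⟫_ℂ = -(κ : ℂ)⁻¹ * (‖w‖ : ℂ) ^ 2 := by
      rw [hGker w hw, inner_smul_left, inner_self_eq_norm_sq_to_K]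
      simp [Complex.conj_ofReal, map_inv₀]
    rw [map_add, inner_add_left, inner_add_right, inner_add_right, hGz_w, hGw_z, hGw_w]
    ring
  set α : ℝ := ‖y₁‖ with hα
  have hα0 : 0 ≤ α := norm_nonneg _
  -- value of q at y₀
  have hqy₀ : ⟪G y₀, y₀⟫_ℂ = (κ : ℂ)⁻¹ * (α : ℂ) ^ 2 := by
    have := hq y₀ hy₀ y₁ hy₁
    rw [add_comm y₀ y₁, ← hsum] at this
    rw [hy0] at this
    have : ⟪G y₀, y₀⟫_ℂ = (κ : ℂ)⁻¹ * (‖y₁‖ : ℂ) ^ 2 := by linear_combination -this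
    simpa [hα] using this
  refine ⟨y₀, α, hα0, hy₀, hTy₀, ?_⟩
  ext x
  simp only [Set.mem_setOf_eq]
  constructor
  · rintro ⟨hx0, hxT⟩
    have hw : x - y₀ ∈ K := by
      have : T (x - y₀) = 0 := by rw [map_sub, hxT, hTy₀, sub_self]
      exact this
    have hxdec : x = y₀ + (x - y₀) := by abel
    have hqx := hq y₀ hy₀ (x - y₀) hw
    rw [← hxdec, hx0, hqy₀] at hqx
    have hnorm : (‖x - y₀‖ : ℂ) ^ 2 = (α : ℂ) ^ 2 := by
      field_simp at hqx
      linear_combination hqx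
    have hnormR : ‖x - y₀‖ ^ 2 = α ^ 2 := by exact_mod_cast hnorm
    have hnR : ‖x - y₀‖ = α := (sq_eq_sq₀ (norm_nonneg _) hα0).mp hnormR
    rcases eq_or_lt_of_le hα0 with hz | hpos
    · -- α = 0
      obtain ⟨v₀, hv₀K, hv₀ne⟩ := Submodule.exists_mem_ne_zero_of_ne_bot hNm
      have hv₀n : ‖v₀‖ ≠ 0 := norm_ne_zero_iff.mpr hv₀ne
      refine ⟨(‖v₀‖⁻¹ : ℂ) • v₀, K.smul_mem _ hv₀K, ?_, ?_⟩
      · rw [norm_smul]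
        simp [hv₀n]
      · have hx0' : x - y₀ = 0 := by
          have : ‖x - y₀‖ = 0 := by rw [hnR, ← hz]
          exact norm_eq_zero.mp this
        have : x = y₀ := by
          have := sub_eq_zero.mp hx0'
          exact this
        rw [this, ← hz]
        simp
    · refine ⟨(α⁻¹ : ℂ) • (x - y₀), K.smul_mem _ hw, ?_, ?_⟩
      · rw [norm_smul, hnR]
        simp [abs_of_pos hpos, inv_mul_cancel₀ hpos.ne']
      · rw [smul_smul]
        have : (α : ℂ) * (α : ℂ)⁻¹ = 1 := by
          apply mul_inv_cancel₀
          exact_mod_cast hpos.ne'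
        rw [this, one_smul]
        abel
  · rintro ⟨v, hvK, hv1, rfl⟩
    have hαv : (α : ℂ) • v ∈ K := K.smul_mem _ hvK
    constructor
    · rw [hq y₀ hy₀ _ hαv, hqy₀]
      have : ‖(α : ℂ) • v‖ = α := by
        rw [norm_smul, hv1, mul_one]
        simp [abs_of_nonneg hα0]
      rw [this]
      ring
    · rw [map_add, hTy₀]
      have : T ((α : ℂ) • v) = 0 := hαv
      rw [this, add_zero]
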